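/- Let S and T be operator systems with complete norms and Φ : S → T a unital completely positive surjection. Then Φ is a complete order quotient map if and only if the dual map Φ* : T* → S* is a complete order embedding, i.e., for f ∈ M_n(T*), Φ*_n(f) is completely positive (as a map S → M_n) iff f is completely positive (as a map T → M_n). -/

import Mathlib

open scoped TensorProduct Kronecker ComplexOrder Matrix

noncomputable section

/-- Conjugation `α X α*` of an operator-valued matrix by a scalar matrix. -/
def mconj {V : Type} [AddCommGroup V] [Module ℂ V] {m n : Type} [Fintype m]
    (α : Matrix n m ℂ) (X : Matrix m m V) : Matrix n n V :=
  Matrix.of fun i j => ∑ k, ∑ l, (α i k * star (α j l)) • X k l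

/-- Entrywise star (conjugate transpose) of an operator-valued matrix. -/
def mstar {V : Type} [AddCommGroup V] [StarAddMonoid V] {m n : Type}
    (X : Matrix m n V) : Matrix n m V :=
  Matrix.of fun i j => star (X j i)

/-- An abstract operator system: a matrix ordered complex ∗-vector space with an
Archimedean matrix order unit (Choi–Effros). -/
structure OpSys (V : Type) [AddCommGroup V] [Module ℂ V] [StarAddMonoid V]
    [StarModule ℂ V] : Type 1 where
  pos : ∀ (ι : Type) [Fintype ι] [DecidableEq ι], Set (Matrix ι ι V)
  unit : V
  unit_star : star unit = unit
  pos_star : ∀ (ι : Type) [Fintype ι] [DecidableEq ι] (X : Matrix ι ι V),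
    X ∈ pos ι → mstar X = X
  pos_add : ∀ (ι : Type) [Fintype ι] [DecidableEq ι] (X Y : Matrix ι ι V),
    X ∈ pos ι → Y ∈ pos ι → X + Y ∈ pos ι
  pos_conj : ∀ (ι κ : Type) [Fintype ι] [DecidableEq ι] [Fintype κ] [DecidableEq κ]
    (α : Matrix κ ι ℂ) (X : Matrix ι ι V), X ∈ pos ι → mconj α X ∈ pos κ
  unit_pos : ∀ (ι : Type) [Fintype ι] [DecidableEq ι],
    Matrix.diagonal (fun _ => unit) ∈ pos ι
  archimedean : ∀ (ι : Type) [Fintype ι] [DecidableEq ι] (X : Matrix ι ι V),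
    mstar X = X →
    (∀ ε : ℝ, 0 < ε → X + (ε : ℂ) • Matrix.diagonal (fun _ => unit) ∈ pos ι) →
    X ∈ pos ι
  order_unit : ∀ (ι : Type) [Fintype ι] [DecidableEq ι] (X : Matrix ι ι V),
    mstar X = X → ∃ r : ℝ, 0 < r ∧
      (r : ℂ) • Matrix.diagonal (fun _ => unit) - X ∈ pos ι
  proper : ∀ x : V, Matrix.of (fun _ _ : Fin 1 => x) ∈ pos (Fin 1) →
    Matrix.of (fun _ _ : Fin 1 => -x) ∈ pos (Fin 1) → x = 0

variable {V W : Type}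

/-- The matrix norms of an operator system, described as a predicate `‖X‖ ≤ r`,
determined by the order structure via `2×2` block matrices. -/
def OpSys.normLE [AddCommGroup V] [Module ℂ V] [StarAddMonoid V] [StarModule ℂ V]
    (𝒮 : OpSys V) {ι κ : Type} [Fintype ι] [DecidableEq ι] [Fintype κ] [DecidableEq κ]
    (X : Matrix ι κ V) (r : ℝ) : Prop :=
  Matrix.fromBlocks ((r : ℂ) • Matrix.diagonal (fun _ => 𝒮.unit)) X (mstar X)
    ((r : ℂ) • Matrix.diagonal (fun _ => 𝒮.unit)) ∈ 𝒮.pos (ι ⊕ κ)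

/-- The norm of a single element of an operator system. -/
def OpSys.elemNormLE [AddCommGroup V] [Module ℂ V] [StarAddMonoid V] [StarModule ℂ V]
    (𝒮 : OpSys V) (x : V) (r : ℝ) : Prop :=
  𝒮.normLE (Matrix.of fun _ _ : Fin 1 => x) r

/-- Completeness of the norm of an operator system. -/
def OpSys.CompleteNorms [AddCommGroup V] [Module ℂ V] [StarAddMonoid V] [StarModule ℂ V]
    (𝒮 : OpSys V) : Prop :=
  ∀ u : ℕ → V,
    (∀ ε : ℝ, 0 < ε → ∃ N : ℕ, ∀ p ≥ N, ∀ q ≥ N, 𝒮.elemNormLE (u p - u q) ε) →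
    ∃ x : V, ∀ ε : ℝ, 0 < ε → ∃ N : ℕ, ∀ p ≥ N, 𝒮.elemNormLE (u p - x) ε

section Maps

variable [AddCommGroup V] [Module ℂ V] [StarAddMonoid V] [StarModule ℂ V]
variable [AddCommGroup W] [Module ℂ W] [StarAddMonoid W] [StarModule ℂ W]

/-- Completely positive map between operator systems. -/
def IsCPmap (𝒮 : OpSys V) (𝒯 : OpSys W) (Φ : V →ₗ[ℂ] W) : Prop :=
  ∀ (ι : Type) [Fintype ι] [DecidableEq ι], ∀ X ∈ 𝒮.pos ι, X.map Φ ∈ 𝒯.pos ι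

/-- Unital completely positive map between operator systems. -/
def IsUCPmap (𝒮 : OpSys V) (𝒯 : OpSys W) (Φ : V →ₗ[ℂ] W) : Prop :=
  Φ 𝒮.unit = 𝒯.unit ∧ IsCPmap 𝒮 𝒯 Φ

/-- (Unital) complete order embedding between operator systems. -/
def IsCOEmbedding (𝒮 : OpSys V) (𝒯 : OpSys W) (Φ : V →ₗ[ℂ] W) : Prop :=
  Φ 𝒮.unit = 𝒯.unit ∧
  ∀ (ι : Type) [Fintype ι] [DecidableEq ι], ∀ X : Matrix ι ι V,
    X ∈ 𝒮.pos ι ↔ X.map Φ ∈ 𝒯.pos ι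

/-- Complete order quotient map between operator systems: a unital completely positive
surjection such that every positive `Q` admits, for every `ε > 0`, a lift `P` with
`P + ε Iₙ ⊗ 1` positive. -/
def IsCOQuotientMap (𝒮 : OpSys V) (𝒯 : OpSys W) (Φ : V →ₗ[ℂ] W) : Prop :=
  IsUCPmap 𝒮 𝒯 Φ ∧ Function.Surjective Φ ∧
  ∀ (ι : Type) [Fintype ι] [DecidableEq ι], ∀ Q ∈ 𝒯.pos ι, ∀ ε : ℝ, 0 < ε →
    ∃ P : Matrix ι ι V,
      P + (ε : ℂ) • Matrix.diagonal (fun _ => 𝒮.unit) ∈ 𝒮.pos ι ∧ P.map Φ = Q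

end Maps

section Tensor

variable [AddCommGroup V] [Module ℂ V] [AddCommGroup W] [Module ℂ W]

/-- Elementary tensor of operator-valued matrices. -/
def tkron {ι κ : Type} (P : Matrix ι ι V) (Q : Matrix κ κ W) :
    Matrix (ι × κ) (ι × κ) (V ⊗[ℂ] W) :=
  Matrix.of fun p q => P p.1 q.1 ⊗ₜ[ℂ] Q p.2 q.2

/-- The cone `D_n^{max}` : all `α (P ⊗ Q) α*`. -/
def Dmax (posV : ∀ (ι : Type) [Fintype ι] [DecidableEq ι], Set (Matrix ι ι V))
    (posW : ∀ (ι : Type) [Fintype ι] [DecidableEq ι], Set (Matrix ι ι W))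
    (ι : Type) [Fintype ι] [DecidableEq ι] : Set (Matrix ι ι (V ⊗[ℂ] W)) :=
  { Z | ∃ (k l : ℕ) (P : Matrix (Fin k) (Fin k) V) (Q : Matrix (Fin l) (Fin l) W)
      (α : Matrix ι (Fin k × Fin l) ℂ),
      P ∈ posV (Fin k) ∧ Q ∈ posW (Fin l) ∧ Z = mconj α (tkron P Q) }

/-- The positive cones of the maximal operator system tensor product
(the Archimedeanization of `D^{max}`). -/
def maxPos (posV : ∀ (ι : Type) [Fintype ι] [DecidableEq ι], Set (Matrix ι ι V)) (uV : V)
    (posW : ∀ (ι : Type) [Fintype ι] [DecidableEq ι], Set (Matrix ι ι W)) (uW : W)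
    (ι : Type) [Fintype ι] [DecidableEq ι] : Set (Matrix ι ι (V ⊗[ℂ] W)) :=
  { Z | ∀ ε : ℝ, 0 < ε →
      Z + (ε : ℂ) • Matrix.diagonal (fun _ => uV ⊗ₜ[ℂ] uW) ∈ Dmax posV posW ι }

/-- The ground level positive cone of the maximal tensor product. -/
def maxPos1 (posV : ∀ (ι : Type) [Fintype ι] [DecidableEq ι], Set (Matrix ι ι V)) (uV : V)
    (posW : ∀ (ι : Type) [Fintype ι] [DecidableEq ι], Set (Matrix ι ι W)) (uW : W) :
    Set (V ⊗[ℂ] W) :=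
  { z | Matrix.of (fun _ _ : Fin 1 => z) ∈ maxPos posV uV posW uW (Fin 1) }

end Tensor

/-- Positivity in matrix algebras over a (C*-)algebra: elements of the form `Y* Y`. -/
def cstarPos {A : Type} [Ring A] [StarRing A] (ι : Type) [Fintype ι] :
    Set (Matrix ι ι A) :=
  { X | ∃ Y : Matrix ι ι A, X = Yᴴ * Y }

/-- The dual space of an operator system. -/
abbrev DualV (V : Type) [AddCommGroup V] [Module ℂ V] := V →ₗ[ℂ] ℂ

/-- The double dual space. -/
abbrev BiDual (V : Type) [AddCommGroup V] [Module ℂ V] := DualV (DualV V)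

section Dual

variable [AddCommGroup V] [Module ℂ V]

/-- Pairing of a matrix of functionals with an operator-valued matrix. -/
def ampMat {ι κ m : Type} (f : Matrix ι κ (DualV V)) (X : Matrix m m V) :
    Matrix (m × ι) (m × κ) ℂ :=
  Matrix.of fun p q => f p.2 q.2 (X p.1 q.1)

/-- The matrix ordering on the dual space: `Mₙ(S*)⁺ = CP(S, Mₙ)`. -/
def dualPos (posV : ∀ (ι : Type) [Fintype ι] [DecidableEq ι], Set (Matrix ι ι V))
    (ι : Type) [Fintype ι] [DecidableEq ι] : Set (Matrix ι ι (DualV V)) :=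
  { f | ∀ (m : Type) [Fintype m] [DecidableEq m], ∀ X ∈ posV m, (ampMat f X).PosSemidef }

/-- The matrix ordering on the double dual. -/
def bidualPos (posV : ∀ (ι : Type) [Fintype ι] [DecidableEq ι], Set (Matrix ι ι V))
    (ι : Type) [Fintype ι] [DecidableEq ι] : Set (Matrix ι ι (BiDual V)) :=
  { F | ∀ (κ : Type) [Fintype κ] [DecidableEq κ], ∀ f ∈ dualPos posV κ,
      (Matrix.of fun (p q : ι × κ) => F p.1 q.1 (f p.2 q.2)).PosSemidef }

end Dual

/-- `‖M‖ ≤ r` for scalar matrices, via positivity of a `2×2` block matrix. -/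
def cNormLE {ι κ : Type} [Fintype ι] [DecidableEq ι] [Fintype κ] [DecidableEq κ]
    (M : Matrix ι κ ℂ) (r : ℝ) : Prop :=
  (Matrix.fromBlocks ((r : ℂ) • 1) M Mᴴ ((r : ℂ) • 1)).PosSemidef

section DualNorm

/-- The matrix norm data of an operator system, in partially applicable form. -/
def OpSys.normData [AddCommGroup V] [Module ℂ V] [StarAddMonoid V] [StarModule ℂ V]
    (𝒮 : OpSys V) (ι κ : Type) [Fintype ι] [DecidableEq ι] [Fintype κ] [DecidableEq κ] :
    Matrix ι κ V → ℝ → Prop :=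
  fun X r => 𝒮.normLE X r

/-- The matrix cones of matrices over a C*-algebra, in partially applicable form. -/
def cstarPosData (A : Type) [Ring A] [StarRing A]
    (ι : Type) [Fintype ι] [DecidableEq ι] : Set (Matrix ι ι A) :=
  cstarPos ι

/-- The completely bounded norm (as a predicate `‖f‖_cb ≤ r`) on matrices over the
dual of a space with matrix norm data `normV`; this is the operator space dual
matrix norm. -/
def dualNormLE [AddCommGroup V] [Module ℂ V]
    (normV : ∀ (ι κ : Type) [Fintype ι] [DecidableEq ι] [Fintype κ] [DecidableEq κ],
      Matrix ι κ V → ℝ → Prop)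
    (ι κ : Type) [Fintype ι] [DecidableEq ι] [Fintype κ] [DecidableEq κ]
    (f : Matrix ι κ (DualV V)) (r : ℝ) : Prop :=
  ∀ (m : Type) [Fintype m] [DecidableEq m], ∀ X : Matrix m m V,
    normV m m X 1 → cNormLE (ampMat f X) r

end DualNorm

section Werner

variable {U : Type} [AddCommGroup U] [Module ℂ U]

/-- Werner's unitization cone on `U ⊕ ℂ` for a matrix ordered operator space `U`,
given by the matrix cones `posU` and matrix norms `normU` of `U` :
`X + A ∈ Mₙ(Ũ)⁺` iff `A ∈ Mₙ⁺` and
`φ((A+εIₙ)^{-1/2} X (A+εIₙ)^{-1/2}) ≥ -1` for every `ε > 0` and every positive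
contractive functional `φ` on `Mₙ(U)`. -/
def wernerPos (posU : ∀ (ι : Type) [Fintype ι] [DecidableEq ι], Set (Matrix ι ι U))
    (normU : ∀ (ι κ : Type) [Fintype ι] [DecidableEq ι] [Fintype κ] [DecidableEq κ],
      Matrix ι κ U → ℝ → Prop)
    (ι : Type) [Fintype ι] [DecidableEq ι] : Set (Matrix ι ι (U × ℂ)) :=
  { X | (Matrix.of fun i j => (X i j).2).PosSemidef ∧
      ∀ ε : ℝ, 0 < ε → ∀ B : Matrix ι ι ℂ, B.PosDef →
        B * B = Matrix.of (fun i j => (X i j).2) + (ε : ℂ) • 1 →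
        ∀ φ : Matrix ι ι U →ₗ[ℂ] ℂ,
          (∀ g ∈ posU ι, 0 ≤ (φ g).re ∧ (φ g).im = 0) →
          (∀ (g : Matrix ι ι U) (r : ℝ), 0 ≤ r → normU ι ι g r → ‖φ g‖ ≤ r) →
          -1 ≤ (φ (mconj B⁻¹ (Matrix.of fun i j => (X i j).1))).re }

end Werner

section MatrixMaps

variable [AddCommGroup V] [Module ℂ V] [AddCommGroup W] [Module ℂ W]

/-- Amplification of a matrix-algebra valued map evaluated on an operator matrix. -/
def blkMat {p : Type} (φ : V →ₗ[ℂ] Matrix p p ℂ) {ι : Type} (X : Matrix ι ι V) :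
    Matrix (ι × p) (ι × p) ℂ :=
  Matrix.of fun q r => φ (X q.1 r.1) q.2 r.2

/-- Unital completely positive map into a matrix algebra, for raw matrix-cone data. -/
def UCPtoM {R : Type} [AddCommGroup R] [Module ℂ R]
    (posR : ∀ (ι : Type) [Fintype ι] [DecidableEq ι], Set (Matrix ι ι R)) (uR : R)
    {p : Type} [Fintype p] [DecidableEq p] (φ : R →ₗ[ℂ] Matrix p p ℂ) : Prop :=
  φ uR = 1 ∧ ∀ (ι : Type) [Fintype ι] [DecidableEq ι], ∀ X ∈ posR ι, (blkMat φ X).PosSemidef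

/-- Completely positive map from a matrix algebra into matrix-cone data. -/
def CPfromM {p : Type} [Fintype p] [DecidableEq p]
    (posW : ∀ (ι : Type) [Fintype ι] [DecidableEq ι], Set (Matrix ι ι W))
    (ψ : Matrix p p ℂ →ₗ[ℂ] W) : Prop :=
  ∀ (ι : Type) [Fintype ι] [DecidableEq ι] (B : Matrix ι ι (Matrix p p ℂ)),
    (Matrix.of fun (q r : ι × p) => B q.1 r.1 q.2 r.2).PosSemidef →
    (Matrix.of fun i j => ψ (B i j)) ∈ posW ι

/-- The pairing `φ ⊗ ψ : V ⊗ W → M_{p×q}` associated with matrix-algebra valued maps. -/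
def kronPair {p q : Type} [Fintype p] [DecidableEq p] [Fintype q] [DecidableEq q]
    (φ : V →ₗ[ℂ] Matrix p p ℂ) (ψ : W →ₗ[ℂ] Matrix q q ℂ) :
    V ⊗[ℂ] W →ₗ[ℂ] Matrix (p × q) (p × q) ℂ :=
  TensorProduct.lift
    (LinearMap.mk₂ ℂ (fun v w => φ v ⊗ₖ ψ w)
      (fun v v' w => by simp [map_add, Matrix.add_kronecker])
      (fun c v w => by simp [map_smul, Matrix.smul_kronecker])
      (fun v w w' => by simp [map_add, Matrix.kronecker_add])
      (fun c v w => by simp [map_smul, Matrix.kronecker_smul]))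

/-- The ground level positive cone of the minimal operator system tensor product. -/
def minPos1 (posV : ∀ (ι : Type) [Fintype ι] [DecidableEq ι], Set (Matrix ι ι V)) (uV : V)
    (posW : ∀ (ι : Type) [Fintype ι] [DecidableEq ι], Set (Matrix ι ι W)) (uW : W) :
    Set (V ⊗[ℂ] W) :=
  { z | ∀ (k m : ℕ) (φ : V →ₗ[ℂ] Matrix (Fin k) (Fin k) ℂ)
      (ψ : W →ₗ[ℂ] Matrix (Fin m) (Fin m) ℂ),
      UCPtoM posV uV φ → UCPtoM posW uW ψ → (kronPair φ ψ z).PosSemidef }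

/-- The matrix level positive cones of the minimal operator system tensor product. -/
def minPosMat (posV : ∀ (ι : Type) [Fintype ι] [DecidableEq ι], Set (Matrix ι ι V)) (uV : V)
    (posW : ∀ (ι : Type) [Fintype ι] [DecidableEq ι], Set (Matrix ι ι W)) (uW : W)
    (ι : Type) [Fintype ι] [DecidableEq ι] : Set (Matrix ι ι (V ⊗[ℂ] W)) :=
  { Z | ∀ (k m : ℕ) (φ : V →ₗ[ℂ] Matrix (Fin k) (Fin k) ℂ)
      (ψ : W →ₗ[ℂ] Matrix (Fin m) (Fin m) ℂ),
      UCPtoM posV uV φ → UCPtoM posW uW ψ →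
      (Matrix.of fun (q r : ι × (Fin k × Fin m)) =>
        kronPair φ ψ (Z q.1 r.1) q.2 r.2).PosSemidef }

/-- The entry functionals of a matrix-algebra valued map. -/
def entryF {p : Type} (f : V →ₗ[ℂ] Matrix p p ℂ) (i j : p) : DualV V where
  toFun x := f x i j
  map_add' x y := by simp [map_add, Matrix.add_apply]
  map_smul' c x := by simp [map_smul, Matrix.smul_apply]

/-- Conjugation of a matrix-algebra valued map by a fixed scalar matrix. -/
def conjMap {p : Type} [Fintype p] (B : Matrix p p ℂ) (f : V →ₗ[ℂ] Matrix p p ℂ) :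
    V →ₗ[ℂ] Matrix p p ℂ where
  toFun x := B * f x * B
  map_add' x y := by simp [map_add, Matrix.mul_add, Matrix.add_mul]
  map_smul' c x := by simp [map_smul, Matrix.mul_smul, Matrix.smul_mul]

end MatrixMaps

/-- The weak expectation property, for raw matrix-cone data `(posV, uV)` on `V` :
the canonical inclusion into the bidual factors through some `B(H)`
(`H = ℓ²(Λ)`) by unital completely positive maps. -/
def HasWEP {V : Type} [AddCommGroup V] [Module ℂ V]
    (posV : ∀ (ι : Type) [Fintype ι] [DecidableEq ι], Set (Matrix ι ι V)) (uV : V) : Prop :=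
  ∃ (Λ : Type) (Φ : V →ₗ[ℂ] ((lp (fun _ : Λ => ℂ) 2) →L[ℂ] (lp (fun _ : Λ => ℂ) 2)))
    (Ψ : ((lp (fun _ : Λ => ℂ) 2) →L[ℂ] (lp (fun _ : Λ => ℂ) 2)) →ₗ[ℂ] BiDual V),
    Φ uV = 1 ∧
    (∀ (ι : Type) [Fintype ι] [DecidableEq ι], ∀ X ∈ posV ι, X.map Φ ∈ cstarPos ι) ∧
    Ψ 1 = Module.Dual.eval ℂ V uV ∧
    (∀ (ι : Type) [Fintype ι] [DecidableEq ι],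
      ∀ Y ∈ cstarPos (A := (lp (fun _ : Λ => ℂ) 2) →L[ℂ] (lp (fun _ : Λ => ℂ) 2)) ι,
        Y.map Ψ ∈ bidualPos posV ι) ∧
    (∀ x : V, Ψ (Φ x) = Module.Dual.eval ℂ V x)

end

/-! ### Auxiliary lemmas -/

set_option linter.unusedSectionVars false

section AuxBasic

variable {V W : Type}

section Star
variable [AddCommGroup V] [Module ℂ V] [StarAddMonoid V] [StarModule ℂ V]

lemma mstar_apply {ι κ : Type} (X : Matrix ι κ V) (i : κ) (j : ι) :
    mstar X i j = star (X j i) := rfl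

lemma mstar_mstar {ι κ : Type} (X : Matrix ι κ V) : mstar (mstar X) = X := by
  ext i j; simp [mstar]

lemma mstar_add {ι κ : Type} (X Y : Matrix ι κ V) :
    mstar (X + Y) = mstar X + mstar Y := by
  ext i j; simp [mstar]

lemma mstar_neg {ι κ : Type} (X : Matrix ι κ V) : mstar (-X) = -mstar X := by
  ext i j; simp [mstar]

lemma mstar_smul {ι κ : Type} (c : ℂ) (X : Matrix ι κ V) :
    mstar (c • X) = star c • mstar X := by
  ext i j; simp [mstar, star_smul]

lemma mstar_stdBasisMatrix {ι : Type} [DecidableEq ι] (i j : ι) (w : V) :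
    mstar (Matrix.single i j w) = Matrix.single j i (star w) := by
  ext a b
  simp only [mstar, Matrix.single, Matrix.of_apply]
  split_ifs with h1 h2 h2 <;> simp_all [and_comm] <;> tauto

lemma mstar_diagonal {ι : Type} [DecidableEq ι] (u : V) (hu : star u = u) :
    mstar (Matrix.diagonal (fun _ : ι => u)) = Matrix.diagonal (fun _ => u) := by
  ext a b
  by_cases h : a = b <;> simp [mstar, Matrix.diagonal_apply, h, hu, eq_comm]

end Star

section Mconj
variable [AddCommGroup V] [Module ℂ V] [AddCommGroup W] [Module ℂ W]

lemma mconj_apply {m n : Type} [Fintype m] (α : Matrix n m ℂ) (X : Matrix m m V)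
    (i j : n) : mconj α X i j = ∑ k, ∑ l, (α i k * star (α j l)) • X k l := rfl

lemma mconj_zero {m n : Type} [Fintype m] (X : Matrix m m V) :
    mconj (0 : Matrix n m ℂ) X = 0 := by
  ext i j; simp [mconj]

lemma mconj_one {m : Type} [Fintype m] [DecidableEq m] (X : Matrix m m V) :
    mconj (1 : Matrix m m ℂ) X = X := by
  ext i j
  simp [mconj, Matrix.one_apply, ite_smul, apply_ite (star : ℂ → ℂ),
    ite_mul, mul_ite]

lemma mconj_sqrt_smul {m : Type} [Fintype m] [DecidableEq m] (t : ℝ) (ht : 0 ≤ t)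
    (X : Matrix m m V) :
    mconj (Matrix.diagonal (fun _ : m => (Real.sqrt t : ℂ))) X = (t : ℂ) • X := by
  ext i j
  simp only [mconj, Matrix.of_apply, Matrix.diagonal_apply, Matrix.smul_apply]
  rw [Finset.sum_eq_single i]
  · rw [Finset.sum_eq_single j]
    · simp only [if_true, ite_true]
      rw [Complex.star_def, Complex.conj_ofReal, ← Complex.ofReal_mul,
        Real.mul_self_sqrt ht]
    · intro l _ hl; simp [if_neg (Ne.symm hl)]
    · intro h; exact absurd (Finset.mem_univ j) h
  · intro k _ hk; simp [if_neg (Ne.symm hk)]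
  · intro h; exact absurd (Finset.mem_univ i) h

lemma mconj_map (Φ : V →ₗ[ℂ] W) {m n : Type} [Fintype m] (α : Matrix n m ℂ)
    (X : Matrix m m V) : (mconj α X).map Φ = mconj α (X.map Φ) := by
  ext i j
  simp [mconj, Matrix.map_apply, map_sum, map_smul]

end Mconj

section PosBasic
variable [AddCommGroup V] [Module ℂ V] [StarAddMonoid V] [StarModule ℂ V]
variable (𝒮 : OpSys V)

lemma OpSys.pos_zero (ι : Type) [Fintype ι] [DecidableEq ι] :
    (0 : Matrix ι ι V) ∈ 𝒮.pos ι := by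
  have := 𝒮.pos_conj (Fin 1) ι (0 : Matrix ι (Fin 1) ℂ) _ (𝒮.unit_pos (Fin 1))
  rwa [mconj_zero] at this

lemma OpSys.pos_smul {ι : Type} [Fintype ι] [DecidableEq ι] {t : ℝ} (ht : 0 ≤ t)
    {X : Matrix ι ι V} (hX : X ∈ 𝒮.pos ι) : (t : ℂ) • X ∈ 𝒮.pos ι := by
  have := 𝒮.pos_conj ι ι (Matrix.diagonal (fun _ : ι => (Real.sqrt t : ℂ))) X hX
  rwa [mconj_sqrt_smul t ht] at this

lemma OpSys.unit_smul_pos {ι : Type} [Fintype ι] [DecidableEq ι] {t : ℝ} (ht : 0 ≤ t) :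
    (t : ℂ) • Matrix.diagonal (fun _ : ι => 𝒮.unit) ∈ 𝒮.pos ι :=
  𝒮.pos_smul ht (𝒮.unit_pos ι)

end PosBasic

end AuxBasic

section StarMap

variable {V W : Type}
variable [AddCommGroup V] [Module ℂ V] [StarAddMonoid V] [StarModule ℂ V]
variable [AddCommGroup W] [Module ℂ W] [StarAddMonoid W] [StarModule ℂ W]
variable {𝒮 : OpSys V} {𝒯 : OpSys W} {Φ : V →ₗ[ℂ] W}

lemma unit_smul_star (𝒮 : OpSys V) (r : ℝ) :
    star ((r : ℂ) • 𝒮.unit) = (r : ℂ) • 𝒮.unit := by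
  rw [star_smul, 𝒮.unit_star, Complex.star_def, Complex.conj_ofReal]

lemma IsUCPmap.star_herm (h : IsUCPmap 𝒮 𝒯 Φ) {v : V} (hv : star v = v) :
    star (Φ v) = Φ v := by
  have hX : mstar (Matrix.of fun _ _ : Fin 1 => -v) = Matrix.of fun _ _ : Fin 1 => -v := by
    ext i j; simp [mstar, hv]
  obtain ⟨r, hr, hpos⟩ := 𝒮.order_unit (Fin 1) _ hX
  have hT := h.2 (Fin 1) _ hpos
  have hTstar := 𝒯.pos_star (Fin 1) _ hT
  have := congrFun (congrFun hTstar 0) 0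
  simp only [mstar_apply, Matrix.map_apply, Matrix.sub_apply, Matrix.smul_apply,
    Matrix.of_apply, Matrix.diagonal_apply_eq, map_sub, map_smul, map_neg,
    star_sub, star_neg, sub_neg_eq_add] at this
  rw [map_add, map_smul, h.1, star_add, unit_smul_star] at this
  exact add_left_cancel this

lemma IsUCPmap.map_star (h : IsUCPmap 𝒮 𝒯 Φ) (v : V) : Φ (star v) = star (Φ v) := by
  obtain ⟨a, ha⟩ : ∃ a : V, a = (2⁻¹ : ℂ) • (v + star v) := ⟨_, rfl⟩
  obtain ⟨b, hb⟩ : ∃ b : V, b = (-(2⁻¹) * Complex.I) • (v - star v) := ⟨_, rfl⟩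
  have h2 : star (2⁻¹ : ℂ) = 2⁻¹ := by simp [Complex.ext_iff]
  have hc : star (-(2⁻¹) * Complex.I : ℂ) = 2⁻¹ * Complex.I := by simp [Complex.ext_iff]
  have hsa : star a = a := by
    rw [ha, star_smul, star_add, star_star, h2]
    module
  have hsb : star b = b := by
    rw [hb, star_smul, star_sub, star_star, hc]
    module
  have hv1 : v = a + Complex.I • b := by
    rw [ha, hb, smul_smul]
    have hI : Complex.I * (-(2⁻¹) * Complex.I) = (2⁻¹ : ℂ) := by
      simp [Complex.ext_iff]
    rw [hI]
    module
  have hv2 : star v = a - Complex.I • b := by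
    have := congrArg star hv1
    rwa [star_add, hsa, star_smul, hsb, Complex.star_def, Complex.conj_I,
      neg_smul, ← sub_eq_add_neg] at this
  have e1 : Φ v = Φ a + Complex.I • Φ b := by rw [hv1, map_add, map_smul]
  have e2 : Φ (star v) = Φ a - Complex.I • Φ b := by rw [hv2, map_sub, map_smul]
  rw [e2, e1, star_add, star_smul, h.star_herm hsa, h.star_herm hsb,
    Complex.star_def, Complex.conj_I, neg_smul, ← sub_eq_add_neg]

lemma IsUCPmap.map_mstar (h : IsUCPmap 𝒮 𝒯 Φ) {ι κ : Type} (X : Matrix ι κ V) :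
    (mstar X).map Φ = mstar (X.map Φ) := by
  ext i j; simp [mstar, Matrix.map_apply, h.map_star]

end StarMap

section Herm

variable {V : Type} [AddCommGroup V] [Module ℂ V] [StarAddMonoid V] [StarModule ℂ V]
variable {ι : Type}

/-- The Hermitian part of a square operator-valued matrix. -/
noncomputable def hermPart (Z : Matrix ι ι V) : Matrix ι ι V := (2⁻¹ : ℂ) • (Z + mstar Z)

lemma hermPart_add (Z Z' : Matrix ι ι V) :
    hermPart (Z + Z') = hermPart Z + hermPart Z' := by
  rw [hermPart, hermPart, hermPart, mstar_add]
  module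

lemma hermPart_real_smul (r : ℝ) (Z : Matrix ι ι V) :
    hermPart ((r : ℂ) • Z) = (r : ℂ) • hermPart Z := by
  rw [hermPart, hermPart, mstar_smul, Complex.star_def, Complex.conj_ofReal]
  module

lemma hermPart_of_mstar {Z : Matrix ι ι V} (h : mstar Z = Z) : hermPart Z = Z := by
  rw [hermPart, h]
  module

lemma mstar_hermPart (Z : Matrix ι ι V) : mstar (hermPart Z) = hermPart Z := by
  rw [hermPart, mstar_smul, mstar_add, mstar_mstar, Complex.star_def]
  have : (starRingEnd ℂ) 2⁻¹ = 2⁻¹ := by simp [Complex.ext_iff]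
  rw [this]
  module

lemma hermPart_skew_of_mstar {Z : Matrix ι ι V} (h : mstar Z = Z) :
    hermPart (-Complex.I • Z) = 0 := by
  rw [hermPart, mstar_smul, h]
  have : star (-Complex.I) = Complex.I := by simp
  rw [this]
  module

lemma hermPart_I_smul (Z : Matrix ι ι V) :
    hermPart (Complex.I • Z) = -hermPart (-Complex.I • Z) := by
  rw [hermPart, hermPart, mstar_smul, mstar_smul]
  have h1 : star Complex.I = -Complex.I := by simp
  have h2 : star (-Complex.I) = Complex.I := by simp
  rw [h1, h2]
  module

lemma neg_I_smul_I_smul (Z : Matrix ι ι V) : -Complex.I • (Complex.I • Z) = Z := by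
  rw [smul_smul]
  have : -Complex.I * Complex.I = 1 := by simp [Complex.ext_iff]
  rw [this, one_smul]

lemma hermPart_mstar (Z : Matrix ι ι V) : hermPart (mstar Z) = hermPart Z := by
  rw [hermPart, hermPart, mstar_mstar]
  module

lemma hermPart_skew_mstar (Z : Matrix ι ι V) :
    hermPart (-Complex.I • mstar Z) = -hermPart (-Complex.I • Z) := by
  rw [hermPart, hermPart, mstar_smul, mstar_smul, mstar_mstar]
  have h2 : star (-Complex.I) = Complex.I := by simp
  rw [h2]
  module

end Herm

section Lam

variable {W : Type} [AddCommGroup W] [Module ℂ W] [StarAddMonoid W] [StarModule ℂ W]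
variable {ι : Type} [Fintype ι]

/-- A complex-linear functional built from a real-linear one via Hermitian parts. -/
noncomputable def LamFun (lam : Matrix ι ι W →ₗ[ℝ] ℝ) (Z : Matrix ι ι W) : ℂ :=
  (lam (hermPart Z) : ℂ) + Complex.I * (lam (hermPart (-Complex.I • Z)) : ℂ)

lemma lam_real_smul (lam : Matrix ι ι W →ₗ[ℝ] ℝ) (r : ℝ) (M : Matrix ι ι W) :
    lam ((r : ℂ) • M) = r * lam M := by
  rw [Complex.coe_smul, map_smul, smul_eq_mul]

lemma LamFun_add (lam : Matrix ι ι W →ₗ[ℝ] ℝ) (Z Z' : Matrix ι ι W) :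
    LamFun lam (Z + Z') = LamFun lam Z + LamFun lam Z' := by
  rw [LamFun, LamFun, LamFun, smul_add, hermPart_add, hermPart_add, map_add, map_add]
  push_cast
  ring

lemma LamFun_real_smul (lam : Matrix ι ι W →ₗ[ℝ] ℝ) (r : ℝ) (Z : Matrix ι ι W) :
    LamFun lam ((r : ℂ) • Z) = r * LamFun lam Z := by
  rw [LamFun, LamFun, hermPart_real_smul, smul_comm, hermPart_real_smul,
    lam_real_smul, lam_real_smul]
  push_cast
  ring

lemma LamFun_I_smul (lam : Matrix ι ι W →ₗ[ℝ] ℝ) (Z : Matrix ι ι W) :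
    LamFun lam (Complex.I • Z) = Complex.I * LamFun lam Z := by
  rw [LamFun, LamFun, hermPart_I_smul, neg_I_smul_I_smul, map_neg]
  push_cast
  ring_nf
  rw [Complex.I_sq]
  ring

/-- The complex-linear functional associated with a real-linear functional. -/
noncomputable def LamL (lam : Matrix ι ι W →ₗ[ℝ] ℝ) : Matrix ι ι W →ₗ[ℂ] ℂ where
  toFun := LamFun lam
  map_add' := LamFun_add lam
  map_smul' := by
    intro c Z
    show LamFun lam (c • Z) = c * LamFun lam Z
    have hc : c • Z = (c.re : ℂ) • Z + (c.im : ℂ) • (Complex.I • Z) := by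
      rw [smul_smul, ← add_smul]
      congr 1
      exact (Complex.re_add_im c).symm
    rw [hc, LamFun_add, LamFun_real_smul, LamFun_real_smul, LamFun_I_smul]
    have hce : c = (c.re : ℂ) + (c.im : ℂ) * Complex.I := (Complex.re_add_im c).symm
    nth_rewrite 3 [hce]
    ring

lemma LamL_of_mstar (lam : Matrix ι ι W →ₗ[ℝ] ℝ) {Z : Matrix ι ι W}
    (h : mstar Z = Z) : LamL lam Z = (lam Z : ℂ) := by
  show LamFun lam Z = _
  rw [LamFun, hermPart_of_mstar h, hermPart_skew_of_mstar h, map_zero]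
  simp

lemma LamL_mstar (lam : Matrix ι ι W →ₗ[ℝ] ℝ) (Z : Matrix ι ι W) :
    LamL lam (mstar Z) = star (LamL lam Z) := by
  show LamFun lam (mstar Z) = star (LamFun lam Z)
  rw [LamFun, LamFun, hermPart_mstar, hermPart_skew_mstar, map_neg]
  rw [Complex.star_def]
  simp [Complex.ext_iff]

end Lam

open Set in
/-- Algebraic Hahn–Banach separation of a point from a convex set with `0` as core point. -/
lemma core_separation {E : Type*} [AddCommGroup E] [Module ℝ E] (C : Set E)
    (hconv : Convex ℝ C) (h0 : (0 : E) ∈ C)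
    (habs : ∀ x : E, ∃ t : ℝ, 0 < t ∧ ∀ s : ℝ, s ≠ 0 → |s| ≤ t → s • x ∈ C)
    (Q : E) (hQ : Q ∉ C) :
    ∃ lam : E →ₗ[ℝ] ℝ, (∀ x ∈ C, lam x ≤ 1) ∧ 1 ≤ lam Q := by
  have habs' : Absorbent ℝ C := by
    rw [absorbent_iff_inv_smul]
    intro x
    obtain ⟨t, ht, hts⟩ := habs x
    rw [(Metric.hasBasis_cobounded_compl_closedBall (0:ℝ)).eventually_iff]
    refine ⟨t⁻¹, trivial, fun c hc => ?_⟩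
    simp only [mem_compl_iff, Metric.mem_closedBall, Real.dist_eq, sub_zero, not_le] at hc
    have h1 : 0 < |c| := lt_of_le_of_lt (inv_nonneg.2 ht.le) hc
    have hc0 : c ≠ 0 := abs_pos.1 h1
    refine hts c⁻¹ (inv_ne_zero hc0) ?_
    rw [abs_inv]
    rw [inv_le_comm₀ h1 ht]
    exact hc.le
  have hQ0 : Q ≠ 0 := fun h => hQ (h ▸ h0)
  have hgaugeQ : 1 ≤ gauge C Q := by
    by_contra h
    exact hQ (gauge_lt_one_subset_self hconv h0 habs' (by simpa using not_le.1 h))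
  obtain ⟨g, hg1, hg2⟩ := exists_extension_of_le_sublinear
    (LinearPMap.mkSpanSingleton Q (gauge C Q) hQ0) (gauge C)
    (fun c hc x => gauge_smul_of_nonneg hc.le x)
    (gauge_add_le hconv habs')
    (by
      rintro ⟨x, hx⟩
      obtain ⟨c, rfl⟩ := Submodule.mem_span_singleton.1 hx
      rw [LinearPMap.mkSpanSingleton'_apply]
      rcases le_or_gt 0 c with hc | hc
      · rcases eq_or_lt_of_le hc with rfl | hc
        · simp [gauge_zero]
        · rw [gauge_smul_of_nonneg hc.le]; exact le_rfl
      · have : c * gauge C Q ≤ 0 :=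
          mul_nonpos_of_nonpos_of_nonneg hc.le (gauge_nonneg _)
        calc (c • gauge C Q : ℝ) ≤ 0 := by simpa [smul_eq_mul] using this
        _ ≤ gauge C (c • Q) := gauge_nonneg _)
  refine ⟨g, fun x hx => (hg2 x).trans (gauge_le_one_of_mem hx), ?_⟩
  have := hg1 ⟨Q, Submodule.mem_span_singleton_self Q⟩
  rw [LinearPMap.mkSpanSingleton_apply ℝ ℝ hQ0] at this
  rw [this]; exact hgaugeQ

section AmpMat

variable {V W : Type}
variable [AddCommGroup V] [Module ℂ V] [AddCommGroup W] [Module ℂ W]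

lemma ampMat_apply {ι κ m : Type} (f : Matrix ι κ (DualV V)) (X : Matrix m m V)
    (p : m × ι) (q : m × κ) : ampMat f X p q = f p.2 q.2 (X p.1 q.1) := rfl

lemma ampMat_comp (Φ : V →ₗ[ℂ] W) {ι m : Type} (f : Matrix ι ι (DualV W))
    (X : Matrix m m V) :
    ampMat (Matrix.of fun i j => (f i j).comp Φ) X = ampMat f (X.map Φ) := rfl

lemma ampMat_add {ι m : Type} (f : Matrix ι ι (DualV V)) (X Y : Matrix m m V) :
    ampMat f (X + Y) = ampMat f X + ampMat f Y := by
  ext p q; simp [ampMat]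

lemma ampMat_smul {ι m : Type} (f : Matrix ι ι (DualV V)) (c : ℂ) (X : Matrix m m V) :
    ampMat f (c • X) = c • ampMat f X := by
  ext p q; simp [ampMat]

/-- A matrix is positive semidefinite if all its `ε`-perturbations by a fixed PSD
matrix are. -/
lemma psd_of_forall_eps {n : Type} [Fintype n] {A B : Matrix n n ℂ}
    (hB : B.PosSemidef)
    (h : ∀ ε : ℝ, 0 < ε → (A + (ε : ℂ) • B).PosSemidef) : A.PosSemidef := by
  rw [Matrix.posSemidef_iff_dotProduct_mulVec]
  constructor
  · have h1 := (h 1 one_pos).1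
    have : A = (A + ((1 : ℝ) : ℂ) • B) - B := by push_cast; rw [one_smul]; abel
    rw [this]
    exact h1.sub hB.1
  · intro x
    have key : ∀ ε : ℝ, 0 < ε →
        0 ≤ (star x ⬝ᵥ A *ᵥ x) + (ε : ℂ) * (star x ⬝ᵥ B *ᵥ x) := by
      intro ε hε
      have := (h ε hε).dotProduct_mulVec_nonneg x
      rwa [Matrix.add_mulVec, Matrix.smul_mulVec, dotProduct_add,
        dotProduct_smul, smul_eq_mul] at this
    have hb := hB.dotProduct_mulVec_nonneg x
    rw [Complex.nonneg_iff] at hb ⊢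
    obtain ⟨hbre, hbim⟩ := hb
    constructor
    · refine le_of_forall_pos_le_add ?_
      intro ε' hε'
      have hden : 0 < (star x ⬝ᵥ B *ᵥ x).re + 1 := by linarith
      have := key (ε' / ((star x ⬝ᵥ B *ᵥ x).re + 1)) (by positivity)
      rw [Complex.nonneg_iff] at this
      obtain ⟨h1, -⟩ := this
      rw [Complex.add_re, Complex.mul_re, Complex.ofReal_re, Complex.ofReal_im] at h1
      have hdiv : ε' / ((star x ⬝ᵥ B *ᵥ x).re + 1) * (star x ⬝ᵥ B *ᵥ x).re ≤ ε' := by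
        rw [div_mul_eq_mul_div, div_le_iff₀ hden]
        nlinarith
      nlinarith [h1]
    · have := key 1 one_pos
      rw [Complex.nonneg_iff] at this
      obtain ⟨-, h2⟩ := this
      rw [Complex.add_im, Complex.mul_im, Complex.ofReal_re, Complex.ofReal_im] at h2
      rw [← hbim] at h2
      simpa using h2

end AmpMat

section Quad

variable {W : Type} [AddCommGroup W] [Module ℂ W] [StarAddMonoid W] [StarModule ℂ W]
variable {ι m : Type} [Fintype ι] [DecidableEq ι] [Fintype m]

lemma mconj_eq_sum (Y : Matrix m m W) (ξ : m × ι → ℂ) :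
    mconj (Matrix.of fun (i : ι) (k : m) => star (ξ (k, i))) Y
      = ∑ p : m × ι, ∑ q : m × ι,
          (star (ξ p) * ξ q) • Matrix.single p.2 q.2 (Y p.1 q.1) := by
  ext a b
  simp only [mconj, Matrix.of_apply, Matrix.sum_apply, Matrix.smul_apply,
    Matrix.single, Fintype.sum_prod_type, smul_ite, smul_zero, ite_and,
    star_star, Finset.sum_ite_irrel, Finset.sum_const_zero, Finset.sum_ite_eq',
    Finset.mem_univ, if_true]
lemma quad_eq (L : Matrix ι ι W →ₗ[ℂ] ℂ) (Y : Matrix m m W) (ξ : m × ι → ℂ) :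
    star ξ ⬝ᵥ ((Matrix.of fun p q : m × ι =>
        L (Matrix.single p.2 q.2 (Y p.1 q.1))) *ᵥ ξ)
      = L (mconj (Matrix.of fun (i : ι) (k : m) => star (ξ (k, i))) Y) := by
  rw [mconj_eq_sum, map_sum]
  simp only [map_sum, map_smul, smul_eq_mul]
  simp only [dotProduct, Matrix.mulVec, dotProduct, Matrix.of_apply,
    Pi.star_apply, Finset.mul_sum]
  refine Finset.sum_congr rfl fun p _ => Finset.sum_congr rfl fun q _ => by ring

lemma herm_ampMat (L : Matrix ι ι W →ₗ[ℂ] ℂ) (hL : ∀ Z, L (mstar Z) = star (L Z))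
    (Y : Matrix m m W) (hY : mstar Y = Y) :
    (Matrix.of fun p q : m × ι =>
      L (Matrix.single p.2 q.2 (Y p.1 q.1))).IsHermitian := by
  refine Matrix.IsHermitian.ext fun p q => ?_
  show star (L (Matrix.single q.2 p.2 (Y q.1 p.1))) = _
  rw [← hL, mstar_stdBasisMatrix]
  have : star (Y q.1 p.1) = Y p.1 q.1 := by
    conv_rhs => rw [← hY]
    rfl
  rw [this]
  rfl

end Quad

section MainAux

variable {V W : Type}
variable [AddCommGroup V] [Module ℂ V] [StarAddMonoid V] [StarModule ℂ V]
variable [AddCommGroup W] [Module ℂ W] [StarAddMonoid W] [StarModule ℂ W]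
variable {𝒮 : OpSys V} {𝒯 : OpSys W} {Φ : V →ₗ[ℂ] W}

lemma IsUCPmap.map_hermPart (h : IsUCPmap 𝒮 𝒯 Φ) {ι : Type} (X : Matrix ι ι V) :
    (hermPart X).map Φ = hermPart (X.map Φ) := by
  ext i j
  simp [hermPart, Matrix.map_apply, mstar, map_add, map_smul, h.map_star]

lemma mstar_of_shift {ι : Type} [Fintype ι] [DecidableEq ι] (𝒮 : OpSys V)
    {P : Matrix ι ι V} {ε : ℝ}
    (hP : P + (ε : ℂ) • Matrix.diagonal (fun _ => 𝒮.unit) ∈ 𝒮.pos ι) :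
    mstar P = P := by
  have h1 := 𝒮.pos_star ι _ hP
  rw [mstar_add, mstar_smul, mstar_diagonal _ 𝒮.unit_star, Complex.star_def,
    Complex.conj_ofReal] at h1
  exact add_right_cancel h1

lemma map_diagonal_unit (h : IsUCPmap 𝒮 𝒯 Φ) {ι : Type} [DecidableEq ι] :
    (Matrix.diagonal (fun _ : ι => 𝒮.unit)).map Φ = Matrix.diagonal (fun _ => 𝒯.unit) := by
  rw [Matrix.diagonal_map (map_zero Φ), h.1]

end MainAux

/-- **Theorem 6.1.** Let `S` and `T` be operator systems with complete norms and
`Φ : S → T` a unital completely positive surjection.  Then `Φ` is a complete order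
quotient map iff the dual map `Φ* : T* → S*` is a complete order embedding, i.e.
for `f ∈ Mₙ(T*)`, `Φ*ₙ(f)` is completely positive iff `f` is completely positive. -/
theorem quotient_iff_dual_embedding {V W : Type}
    [AddCommGroup V] [Module ℂ V] [StarAddMonoid V] [StarModule ℂ V]
    [AddCommGroup W] [Module ℂ W] [StarAddMonoid W] [StarModule ℂ W]
    (𝒮 : OpSys V) (𝒯 : OpSys W)
    (hScomp : 𝒮.CompleteNorms) (hTcomp : 𝒯.CompleteNorms)
    (Φ : V →ₗ[ℂ] W) (hucp : IsUCPmap 𝒮 𝒯 Φ) (hsurj : Function.Surjective Φ) :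
    IsCOQuotientMap 𝒮 𝒯 Φ ↔
      ∀ (ι : Type) [Fintype ι] [DecidableEq ι] (f : Matrix ι ι (DualV W)),
        ((Matrix.of fun i j => (f i j).comp Φ) ∈ dualPos 𝒮.pos ι ↔
          f ∈ dualPos 𝒯.pos ι) := by
  constructor
  · rintro ⟨-, -, hlift⟩ ι _ _ f
    constructor
    · intro hcomp m _ _ X hX
      have hBpos := hcomp m (Matrix.diagonal fun _ => 𝒮.unit) (𝒮.unit_pos m)
      refine psd_of_forall_eps hBpos ?_
      intro ε hε
      obtain ⟨P, hP, hPmap⟩ := hlift m X hX ε hε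
      have hps := hcomp m _ hP
      have h2 : ampMat (Matrix.of fun i j => (f i j).comp Φ)
            (P + (ε : ℂ) • Matrix.diagonal (fun _ => 𝒮.unit))
          = ampMat f X + (ε : ℂ) • ampMat (Matrix.of fun i j => (f i j).comp Φ)
              (Matrix.diagonal fun _ => 𝒮.unit) := by
        rw [ampMat_add, ampMat_smul, ampMat_comp, hPmap]
      rwa [h2] at hps
    · intro hf m _ _ X hX
      rw [ampMat_comp]
      exact hf m (X.map Φ) (hucp.2 m X hX)
  · intro hdual
    refine ⟨hucp, hsurj, ?_⟩
    intro ι _ _ Q hQ ε hε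
    by_contra hcon
    push_neg at hcon
    -- notation
    set eS : Matrix ι ι V := Matrix.diagonal fun _ => 𝒮.unit with heS
    set eT : Matrix ι ι W := Matrix.diagonal fun _ => 𝒯.unit with heT
    set D : Set (Matrix ι ι V) := {P | P + (ε : ℂ) • eS ∈ 𝒮.pos ι} with hD
    set C : Set (Matrix ι ι W) :=
      {Z | hermPart Z ∈ (fun P : Matrix ι ι V => P.map Φ) '' D} with hC
    have hmapE : eS.map Φ = eT := map_diagonal_unit hucp
    -- image elements are mstar-fixed
    have himg : ∀ P ∈ D, mstar (P.map Φ) = P.map Φ := by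
      intro P hP
      rw [← hucp.map_mstar, mstar_of_shift 𝒮 hP]
    have himgC : ∀ P ∈ D, P.map Φ ∈ C := by
      intro P hP
      have : hermPart (P.map Φ) ∈ (fun P : Matrix ι ι V => P.map Φ) '' D := by
        rw [hermPart_of_mstar (himg P hP)]
        exact ⟨P, hP, rfl⟩
      exact this
    -- 0 ∈ C
    have h0C : (0 : Matrix ι ι W) ∈ C := by
      have h0D : (0 : Matrix ι ι V) ∈ D := by
        show (0 : Matrix ι ι V) + (ε : ℂ) • eS ∈ 𝒮.pos ι
        rw [zero_add]
        exact 𝒮.unit_smul_pos hε.le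
      have := himgC 0 h0D
      simpa [Matrix.map_zero] using this
    -- convexity
    have hmap_lin : ∀ (c d : ℂ) (P₁ P₂ : Matrix ι ι V),
        (c • P₁ + d • P₂).map Φ = c • P₁.map Φ + d • P₂.map Φ := by
      intro c d P₁ P₂
      ext i j
      simp [Matrix.map_apply, map_add, map_smul]
    have hconv : Convex ℝ C := by
      intro Z₁ h₁ Z₂ h₂ a b ha hb hab
      obtain ⟨P₁, hP₁, hm₁⟩ := h₁
      obtain ⟨P₂, hP₂, hm₂⟩ := h₂
      dsimp only at hm₁ hm₂
      have hherm : hermPart (a • Z₁ + b • Z₂)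
          = (a : ℂ) • hermPart Z₁ + (b : ℂ) • hermPart Z₂ := by
        rw [← Complex.coe_smul a Z₁, ← Complex.coe_smul b Z₂, hermPart_add,
          hermPart_real_smul, hermPart_real_smul]
      have hab' : ((a : ℂ) + (b : ℂ)) = 1 := by
        rw [← Complex.ofReal_add, hab, Complex.ofReal_one]
      have hsum : ((a : ℂ) • P₁ + (b : ℂ) • P₂) + (ε : ℂ) • eS
          = (a : ℂ) • (P₁ + (ε : ℂ) • eS) + (b : ℂ) • (P₂ + (ε : ℂ) • eS) := by
        conv_lhs => rw [← one_smul ℂ ((ε : ℂ) • eS), ← hab']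
        rw [add_smul, smul_add, smul_add]
        abel
      refine ⟨(a : ℂ) • P₁ + (b : ℂ) • P₂, ?_, ?_⟩
      · show ((a : ℂ) • P₁ + (b : ℂ) • P₂) + (ε : ℂ) • eS ∈ 𝒮.pos ι
        rw [hsum]
        exact 𝒮.pos_add ι _ _ (𝒮.pos_smul ha hP₁) (𝒮.pos_smul hb hP₂)
      · show ((a : ℂ) • P₁ + (b : ℂ) • P₂).map Φ = _
        rw [hmap_lin, hm₁, hm₂, ← hherm]
    -- monotonicity in the unit coefficient
    have hmono : ∀ (X : Matrix ι ι V) (r R : ℝ), 0 ≤ R - r →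
        X + (r : ℂ) • eS ∈ 𝒮.pos ι → X + (R : ℂ) • eS ∈ 𝒮.pos ι := by
      intro X r R hrR hX
      have hsplit : X + (R : ℂ) • eS = (X + (r : ℂ) • eS) + ((R - r : ℝ) : ℂ) • eS := by
        rw [add_assoc, ← add_smul]
        congr 1
        push_cast
        ring_nf
      rw [hsplit]
      exact 𝒮.pos_add ι _ _ hX (𝒮.unit_smul_pos hrR)
    -- 0 is a core point of C
    have habs : ∀ Z : Matrix ι ι W, ∃ t : ℝ, 0 < t ∧
        ∀ s : ℝ, s ≠ 0 → |s| ≤ t → s • Z ∈ C := by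
      intro Z
      obtain ⟨P₀, hP₀⟩ : ∃ P₀ : Matrix ι ι V, P₀.map Φ = hermPart Z := by
        refine ⟨Matrix.of fun i j => Classical.choose (hsurj (hermPart Z i j)), ?_⟩
        ext i j
        exact Classical.choose_spec (hsurj (hermPart Z i j))
      obtain ⟨P', hP'def⟩ : ∃ P' : Matrix ι ι V, P' = hermPart P₀ := ⟨_, rfl⟩
      have hmapP' : P'.map Φ = hermPart Z := by
        rw [hP'def, hucp.map_hermPart, hP₀, hermPart_of_mstar (mstar_hermPart Z)]
      have hsP' : mstar P' = P' := by rw [hP'def]; exact mstar_hermPart P₀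
      obtain ⟨r₁, hr₁, hpos₁⟩ := 𝒮.order_unit ι P' hsP'
      obtain ⟨r₂, hr₂, hpos₂⟩ := 𝒮.order_unit ι (-P') (by rw [mstar_neg, hsP'])
      obtain ⟨r, hrdef⟩ : ∃ r : ℝ, r = max r₁ r₂ := ⟨_, rfl⟩
      have hr : 0 < r := hrdef ▸ lt_of_lt_of_le hr₁ (le_max_left _ _)
      have hplus : P' + (r : ℂ) • eS ∈ 𝒮.pos ι := by
        refine hmono P' r₂ r (by rw [hrdef]; simp [le_max_right]) ?_
        have := hpos₂
        rw [sub_neg_eq_add, add_comm] at this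
        exact this
      have hminus : (-P') + (r : ℂ) • eS ∈ 𝒮.pos ι := by
        refine hmono (-P') r₁ r (by rw [hrdef]; simp [le_max_left]) ?_
        have := hpos₁
        rw [sub_eq_neg_add] at this
        exact this
      refine ⟨ε / r, div_pos hε hr, ?_⟩
      intro s hs0 hst
      have hhZ : hermPart (s • Z) = (s : ℂ) • hermPart Z := by
        rw [← Complex.coe_smul s Z, hermPart_real_smul]
      have hmem : (s : ℂ) • P' + (ε : ℂ) • eS ∈ 𝒮.pos ι := by
        rcases lt_or_gt_of_ne hs0 with hneg | hposi
        · have habs_s : |s| = -s := abs_of_neg hneg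
          have hsr : (-s) * r ≤ ε := by
            rw [habs_s] at hst
            rw [← le_div_iff₀ hr]
            exact hst
          have e1 := 𝒮.pos_smul (t := -s) (by linarith) hminus
          have e2 := 𝒮.unit_smul_pos (ι := ι) (t := ε - (-s) * r) (by linarith)
          have key : ((-s : ℝ) : ℂ) • ((-P') + (r : ℂ) • eS)
              + ((ε - (-s) * r : ℝ) : ℂ) • eS = (s : ℂ) • P' + (ε : ℂ) • eS := by
            push_cast
            module
          rw [← key]
          exact 𝒮.pos_add ι _ _ e1 e2
        · have hsr : s * r ≤ ε := by
            rw [abs_of_pos hposi] at hst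
            rw [← le_div_iff₀ hr]
            exact hst
          have e1 := 𝒮.pos_smul (t := s) hposi.le hplus
          have e2 := 𝒮.unit_smul_pos (ι := ι) (t := ε - s * r) (by linarith)
          have key : ((s : ℝ) : ℂ) • (P' + (r : ℂ) • eS)
              + ((ε - s * r : ℝ) : ℂ) • eS = (s : ℂ) • P' + (ε : ℂ) • eS := by
            push_cast
            module
          rw [← key]
          exact 𝒮.pos_add ι _ _ e1 e2
      have : hermPart (s • Z) ∈ (fun P : Matrix ι ι V => P.map Φ) '' D := by
        refine ⟨(s : ℂ) • P', hmem, ?_⟩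
        show ((s : ℂ) • P').map Φ = _
        have : ((s : ℂ) • P').map Φ = (s : ℂ) • P'.map Φ := by
          ext i j; simp [Matrix.map_apply, map_smul]
        rw [this, hmapP', hhZ]
      exact this
    -- Q is not in C
    have hQC : Q ∉ C := by
      intro hmem
      obtain ⟨P, hP, hm⟩ := hmem
      dsimp only at hm
      rw [hermPart_of_mstar (𝒯.pos_star ι Q hQ)] at hm
      exact hcon P hP hm
    obtain ⟨lam, hlam1, hlamQ⟩ := core_separation C hconv h0C habs Q hQC
    -- the key positivity bound for `lam`
    have hkey : ∀ P ∈ 𝒮.pos ι, lam (P.map Φ) ≤ 0 := by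
      intro P hP
      by_contra hposl
      push_neg at hposl
      have hτ : ∀ τ : ℝ, 0 < τ → τ * lam (P.map Φ) - ε * lam eT ≤ 1 := by
        intro τ hτ0
        have hD' : ((τ : ℂ) • P - (ε : ℂ) • eS) ∈ D := by
          show ((τ : ℂ) • P - (ε : ℂ) • eS) + (ε : ℂ) • eS ∈ 𝒮.pos ι
          rw [sub_add_cancel]
          exact 𝒮.pos_smul hτ0.le hP
        have hmem := himgC _ hD'
        have hmap : ((τ : ℂ) • P - (ε : ℂ) • eS).map Φ
            = (τ : ℂ) • P.map Φ - (ε : ℂ) • eT := by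
          rw [← hmapE]
          ext i j
          simp [Matrix.map_apply, map_sub, map_smul]
        have hle := hlam1 _ hmem
        rw [hmap] at hle
        rw [Complex.coe_smul, Complex.coe_smul, map_sub, map_smul, map_smul] at hle
        simpa using hle
      obtain ⟨cg, hcg⟩ : ∃ cg : ℝ, cg = 1 + ε * lam eT := ⟨_, rfl⟩
      have h2 := hτ ((|cg| + 1) / lam (P.map Φ)) (by positivity)
      rw [div_mul_cancel₀ _ (ne_of_gt hposl)] at h2
      have := le_abs_self cg
      rw [hcg] at *
      linarith [le_abs_self (1 + ε * lam eT)]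
    -- the dual functional matrix
    obtain ⟨L, hLdef⟩ : ∃ L : Matrix ι ι W →ₗ[ℂ] ℂ, L = LamL lam := ⟨_, rfl⟩
    have hLmstar : ∀ Z : Matrix ι ι W, (-L) (mstar Z) = star ((-L) Z) := by
      intro Z
      rw [LinearMap.neg_apply, LinearMap.neg_apply, hLdef, LamL_mstar, star_neg]
    obtain ⟨ins, hins⟩ : ∃ ins : ι → ι → (W →ₗ[ℂ] Matrix ι ι W),
        ∀ i j w, ins i j w = Matrix.single i j w := by
      refine ⟨fun i j =>
        { toFun := fun w => Matrix.single i j w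
          map_add' := fun x y => Matrix.single_add i j x y
          map_smul' := fun c x => by simp }, fun i j w => rfl⟩
    obtain ⟨f, hfdef⟩ : ∃ f : Matrix ι ι (DualV W),
        f = Matrix.of fun i j => (-L).comp (ins i j) := ⟨_, rfl⟩
    have hampf : ∀ (m : Type) (Y : Matrix m m W), ampMat f Y =
        Matrix.of fun p q : m × ι => (-L) (Matrix.single p.2 q.2 (Y p.1 q.1)) := by
      intro m Y
      ext p q
      rw [ampMat_apply, hfdef]
      show ((-L).comp (ins p.2 q.2)) (Y p.1 q.1) = _
      rw [LinearMap.comp_apply, hins]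
      rfl
    have hfS : (Matrix.of fun i j => (f i j).comp Φ) ∈ dualPos 𝒮.pos ι := by
      intro m _ _ X hX
      rw [ampMat_comp]
      have hYst : mstar (X.map Φ) = X.map Φ := by
        rw [← hucp.map_mstar, 𝒮.pos_star m X hX]
      rw [hampf m (X.map Φ)]
      rw [Matrix.posSemidef_iff_dotProduct_mulVec]
      constructor
      · exact herm_ampMat (-L) hLmstar (X.map Φ) hYst
      · intro x
        rw [quad_eq (-L) (X.map Φ) x]
        obtain ⟨α, hα⟩ : ∃ α : Matrix ι m ℂ,
            α = Matrix.of fun (i : ι) (k : m) => star (x (k, i)) := ⟨_, rfl⟩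
        rw [← hα, ← mconj_map Φ α X]
        have hRpos := 𝒮.pos_conj m ι α X hX
        have hmst : mstar ((mconj α X).map Φ) = (mconj α X).map Φ := by
          rw [← hucp.map_mstar, 𝒮.pos_star ι _ hRpos]
        rw [LinearMap.neg_apply, hLdef, LamL_of_mstar lam hmst]
        have hle := hkey _ hRpos
        rw [← Complex.ofReal_neg, Complex.zero_le_real]
        linarith
    have hfT := (hdual ι f).mp hfS
    have hPSD := hfT ι Q hQ
    have hx := hPSD.dotProduct_mulVec_nonneg (fun p : ι × ι => if p.2 = p.1 then 1 else 0)
    rw [hampf ι Q, quad_eq (-L) Q _] at hx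
    have hα : (Matrix.of fun (i : ι) (k : ι) =>
        star (if (k, i).2 = (k, i).1 then (1 : ℂ) else 0)) = (1 : Matrix ι ι ℂ) := by
      ext i k
      simp [Matrix.one_apply, apply_ite (star : ℂ → ℂ)]
    rw [hα, mconj_one, LinearMap.neg_apply, hLdef,
      LamL_of_mstar lam (𝒯.pos_star ι Q hQ), ← Complex.ofReal_neg,
      Complex.zero_le_real] at hx
    linarith
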